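/- Let n ≥ 1 and let x_i = cos(iπ/(n + 1)) for i = 1, …, n be the Gauss–Chebyshev nodes of the second kind, with weights w_i = (π/(n + 1)) sin²(iπ/(n + 1)). Then for every real polynomial p of degree at most 2n − 1, ∫_{−1}^{1} p(x) √(1 − x²) dx = Σ_{i=1}^{n} w_i p(x_i). That is, the n-point Gauss–Chebyshev quadrature rule of the second kind is exact on all polynomials of degree up to 2n − 1. -/

import Mathlib

open Real MeasureTheory intervalIntegral

namespace GaussChebyshevAux
open Real Finset Complex Polynomial intervalIntegral

lemma sum_cos_eq (n : ℕ) (j : ℤ) (hj : j ≠ 0) (hjlt : |j| < 2*(n+1)) :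
    ∑ i ∈ Finset.Icc 1 n, Real.cos (j * ((i:ℝ) * π / (n+1))) = -(1 + (-1:ℝ)^j)/2 := by
  have hN : ((n:ℝ)+1) ≠ 0 := by positivity
  set t : ℝ := j * π / (n+1) with ht
  set z : ℂ := Complex.exp (t * Complex.I) with hz
  have hz1 : z ≠ 1 := by
    intro h
    rw [hz, Complex.exp_eq_one_iff] at h
    obtain ⟨m, hm⟩ := h
    have h2 : (t:ℂ) = m * (2*π) := by
      have : (t:ℂ) * Complex.I = (m * (2*π)) * Complex.I := by rw [hm]; ring
      exact mul_right_cancel₀ Complex.I_ne_zero this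
    have h3 : t = m * (2*π) := by exact_mod_cast h2
    rw [ht] at h3
    have h4 : (j:ℝ) * π = m * (2*π) * ((n:ℝ)+1) := by
      field_simp at h3; linear_combination π * h3
    have h5 : (j:ℝ) = m * 2 * ((n:ℝ)+1) := by
      apply mul_right_cancel₀ Real.pi_ne_zero
      linear_combination h4
    have h6 : j = m * 2 * ((n:ℤ)+1) := by exact_mod_cast h5
    have hm0 : m ≠ 0 := by rintro rfl; simp at h6; exact hj h6
    have : 2*((n:ℤ)+1) ≤ |j| := by
      rw [h6, abs_mul, abs_mul]
      have h7 : (1:ℤ) ≤ |m| := Int.one_le_abs hm0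
      have h8 : |(2:ℤ)| = 2 := by norm_num
      have h9 : |((n:ℤ)+1)| = (n:ℤ)+1 := abs_of_nonneg (by omega)
      rw [h8, h9]
      nlinarith [h7]
    omega
  have hre : ∀ i : ℕ, (z^i).re = Real.cos (j * ((i:ℝ) * π / (n+1))) := by
    intro i
    have : z^i = Complex.exp ((((i:ℝ)*t : ℝ)) * Complex.I) := by
      rw [hz, ← Complex.exp_nat_mul]; push_cast; ring_nf
    rw [this, Complex.exp_ofReal_mul_I_re]
    congr 1
    rw [ht]; ring
  have hzN : z^(n+1) = (-1:ℂ)^j := by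
    have h1 : z^(n+1) = Complex.exp ((((n:ℝ)+1)*t : ℝ) * Complex.I) := by
      rw [hz, ← Complex.exp_nat_mul]; push_cast; ring_nf
    have h2 : ((n:ℝ)+1)*t = j*π := by rw [ht]; field_simp
    rw [h1, h2]
    have : (((j:ℝ)*π : ℝ) : ℂ) * Complex.I = (j:ℂ) * (π * Complex.I) := by push_cast; ring
    rw [this, Complex.exp_int_mul, Complex.exp_pi_mul_I]
  have hgeom : ∑ i ∈ Finset.range (n+1), z^i = (z^(n+1) - 1)/(z-1) := geom_sum_eq hz1 (n+1)
  have hins : Finset.range (n+1) = insert 0 (Finset.Icc 1 n) := by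
    ext i; simp [Finset.mem_range, Finset.mem_Icc]; omega
  have hsum : ∑ i ∈ Finset.Icc 1 n, z^i = ((-1:ℂ)^j - z)/(z-1) := by
    have h0 : (0:ℕ) ∉ Finset.Icc 1 n := by simp
    have := hgeom
    rw [hins, Finset.sum_insert h0, hzN] at this
    have hz1' : z - 1 ≠ 0 := sub_ne_zero.mpr hz1
    field_simp at this ⊢
    linear_combination this
  have hfinal : ∑ i ∈ Finset.Icc 1 n, Real.cos (j * ((i:ℝ) * π / (n+1)))
      = (((-1:ℂ)^j - z)/(z-1)).re := by
    rw [← hsum]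
    rw [Complex.re_sum]
    exact Finset.sum_congr rfl fun i _ => (hre i).symm
  rw [hfinal]
  have hz1' : z - 1 ≠ 0 := sub_ne_zero.mpr hz1
  rcases Int.even_or_odd j with he | ho
  · rw [he.neg_one_zpow]
    have : ((1:ℂ) - z)/(z-1) = -1 := by rw [div_eq_iff hz1']; ring
    rw [this, he.neg_one_zpow]
    norm_num
  · rw [ho.neg_one_zpow]
    have hxy : z.re^2 + z.im^2 = 1 := by
      rw [hz, Complex.exp_ofReal_mul_I_re, Complex.exp_ofReal_mul_I_im]
      exact Real.cos_sq_add_sin_sq t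
    have hnum : (-1 - z).re * (z-1).re + (-1 - z).im * (z-1).im = 0 := by
      simp [Complex.sub_re, Complex.sub_im]; nlinarith [hxy]
    have : (((-1:ℂ) - z)/(z-1)).re = 0 := by
      rw [Complex.div_re, ← add_div, hnum, zero_div]
    rw [this, ho.neg_one_zpow]
    norm_num

lemma integral_cos_int (j : ℤ) (hj : j ≠ 0) :
    ∫ θ in (0:ℝ)..π, Real.cos (j * θ) = 0 := by
  have hj' : (j:ℝ) ≠ 0 := Int.cast_ne_zero.mpr hj
  have h := intervalIntegral.integral_comp_mul_left (a := (0:ℝ)) (b := π)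
    (f := Real.cos) (c := (j:ℝ)) hj'
  rw [h, mul_zero, integral_cos, Real.sin_zero, Real.sin_int_mul_pi]
  simp

lemma integral_cos_zero : ∫ θ in (0:ℝ)..π, Real.cos ((0:ℤ) * θ) = π := by
  simp [Real.pi_pos.le]

lemma cos_mul_sin_sq (k : ℤ) (θ : ℝ) :
    Real.cos (k*θ) * Real.sin θ^2
      = (2*Real.cos (k*θ) - Real.cos ((k+2)*θ) - Real.cos ((k-2)*θ))/4 := by
  rw [show ((k:ℝ)+2)*θ = k*θ + 2*θ by ring, show ((k:ℝ)-2)*θ = k*θ - 2*θ by ring, Real.cos_add, Real.cos_sub, Real.cos_two_mul, Real.sin_two_mul]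
  linear_combination Real.cos ((k:ℝ)*θ) * Real.sin_sq_add_cos_sq θ
lemma key (n : ℕ) (hn : 1 ≤ n) (k : ℤ) (hk0 : 0 ≤ k) (hk : k ≤ 2*(n:ℤ)-1) :
    ∫ θ in (0:ℝ)..π, Real.cos (k*θ) * Real.sin θ^2
      = (π/(n+1)) * ∑ i ∈ Finset.Icc 1 n,
          Real.sin ((i:ℝ)*π/(n+1))^2 * Real.cos (k * ((i:ℝ)*π/(n+1))) := by
  have hIval : ∀ j : ℤ, ∫ θ in (0:ℝ)..π, Real.cos (j*θ) = if j = 0 then π else 0 := by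
    intro j
    by_cases h : j = 0
    · simp [h, Real.pi_pos.le]
    · simp [h, integral_cos_int j h]
  have ic : ∀ a : ℝ, IntervalIntegrable (fun θ => Real.cos (a*θ)) MeasureTheory.volume 0 π :=
    fun a => (Real.continuous_cos.comp (continuous_const.mul continuous_id)).intervalIntegrable _ _
  -- integral side
  have hI : ∫ θ in (0:ℝ)..π, Real.cos (k*θ) * Real.sin θ^2
      = (2*(∫ θ in (0:ℝ)..π, Real.cos (k*θ))
          - (∫ θ in (0:ℝ)..π, Real.cos (((k:ℝ)+2)*θ))
          - (∫ θ in (0:ℝ)..π, Real.cos (((k:ℝ)-2)*θ)))/4 := by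
    rw [show (∫ θ in (0:ℝ)..π, Real.cos (k*θ) * Real.sin θ^2)
        = ∫ θ in (0:ℝ)..π, (2*Real.cos (k*θ) - Real.cos (((k:ℝ)+2)*θ)
            - Real.cos (((k:ℝ)-2)*θ))/4 from
      intervalIntegral.integral_congr (fun θ _ => cos_mul_sin_sq k θ)]
    rw [intervalIntegral.integral_div]
    rw [intervalIntegral.integral_sub (((ic _).const_mul 2).sub (ic _)) (ic _),
        intervalIntegral.integral_sub ((ic _).const_mul 2) (ic _),
        intervalIntegral.integral_const_mul]
  -- sum side
  have hSplit : ∑ i ∈ Finset.Icc 1 n,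
        Real.sin ((i:ℝ)*π/(n+1))^2 * Real.cos (k * ((i:ℝ)*π/(n+1)))
      = (2*(∑ i ∈ Finset.Icc 1 n, Real.cos (k * ((i:ℝ)*π/(n+1))))
          - (∑ i ∈ Finset.Icc 1 n, Real.cos (((k:ℝ)+2) * ((i:ℝ)*π/(n+1))))
          - (∑ i ∈ Finset.Icc 1 n, Real.cos (((k:ℝ)-2) * ((i:ℝ)*π/(n+1)))))/4 := by
    rw [show (∑ i ∈ Finset.Icc 1 n,
          Real.sin ((i:ℝ)*π/(n+1))^2 * Real.cos (k * ((i:ℝ)*π/(n+1))))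
        = ∑ i ∈ Finset.Icc 1 n, (2*Real.cos (k*((i:ℝ)*π/(n+1)))
            - Real.cos (((k:ℝ)+2)*((i:ℝ)*π/(n+1)))
            - Real.cos (((k:ℝ)-2)*((i:ℝ)*π/(n+1))))/4 from
      Finset.sum_congr rfl fun i _ => by rw [mul_comm]; exact cos_mul_sin_sq k _]
    rw [← Finset.sum_div, Finset.sum_sub_distrib, Finset.sum_sub_distrib, ← Finset.mul_sum]
  rw [hI, hSplit]
  have hcast2 : ((k+2 : ℤ) : ℝ) = (k:ℝ)+2 := by push_cast; ring
  have hcast3 : ((k-2 : ℤ) : ℝ) = (k:ℝ)-2 := by push_cast; ring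
  have hS : ∀ j : ℤ, j ≠ 0 → |j| < 2*((n:ℤ)+1) →
      ∑ i ∈ Finset.Icc 1 n, Real.cos ((j:ℝ) * ((i:ℝ)*π/(n+1))) = -(1 + (-1:ℝ)^j)/2 := by
    intro j h1 h2
    have := sum_cos_eq n j h1 (by exact_mod_cast h2)
    exact this
  have hN : ((n:ℝ)+1) ≠ 0 := by positivity
  rw [← hcast2, ← hcast3, hIval k, hIval (k+2), hIval (k-2)]
  have hcase : k = 0 ∨ k = 1 ∨ k = 2 ∨ 3 ≤ k := by omega
  rcases hcase with rfl | rfl | rfl | h3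
  · -- k = 0
    have s0 : ∑ i ∈ Finset.Icc 1 n, Real.cos (((0:ℤ):ℝ) * ((i:ℝ)*π/(n+1))) = n := by
      push_cast
      simp [Nat.card_Icc]
    have s2 : ∑ i ∈ Finset.Icc 1 n, Real.cos ((((0:ℤ)+2:ℤ):ℝ) * ((i:ℝ)*π/(n+1)))
        = -(1 + (-1:ℝ)^((0:ℤ)+2))/2 := hS _ (by omega) (by rw [abs_lt]; omega)
    have s3 : ∑ i ∈ Finset.Icc 1 n, Real.cos ((((0:ℤ)-2:ℤ):ℝ) * ((i:ℝ)*π/(n+1)))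
        = -(1 + (-1:ℝ)^((0:ℤ)-2))/2 := hS _ (by omega) (by rw [abs_lt]; omega)
    rw [s0, s2, s3]
    norm_num
    field_simp
    ring
  · -- k = 1
    have s1 : ∑ i ∈ Finset.Icc 1 n, Real.cos (((1:ℤ):ℝ) * ((i:ℝ)*π/(n+1)))
        = -(1 + (-1:ℝ)^((1:ℤ)))/2 := hS _ (by omega) (by rw [abs_lt]; omega)
    have s2 : ∑ i ∈ Finset.Icc 1 n, Real.cos ((((1:ℤ)+2:ℤ):ℝ) * ((i:ℝ)*π/(n+1)))
        = -(1 + (-1:ℝ)^((1:ℤ)+2))/2 := hS _ (by omega) (by rw [abs_lt]; omega)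
    have s3 : ∑ i ∈ Finset.Icc 1 n, Real.cos ((((1:ℤ)-2:ℤ):ℝ) * ((i:ℝ)*π/(n+1)))
        = -(1 + (-1:ℝ)^((1:ℤ)-2))/2 := hS _ (by omega) (by rw [abs_lt]; omega)
    rw [s1, s2, s3]
    norm_num [zpow_neg]
  · -- k = 2
    have s1 : ∑ i ∈ Finset.Icc 1 n, Real.cos (((2:ℤ):ℝ) * ((i:ℝ)*π/(n+1)))
        = -(1 + (-1:ℝ)^((2:ℤ)))/2 := hS _ (by omega) (by rw [abs_lt]; omega)
    have s2 : ∑ i ∈ Finset.Icc 1 n, Real.cos ((((2:ℤ)+2:ℤ):ℝ) * ((i:ℝ)*π/(n+1)))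
        = -(1 + (-1:ℝ)^((2:ℤ)+2))/2 := hS _ (by omega) (by rw [abs_lt]; omega)
    have s0 : ∑ i ∈ Finset.Icc 1 n, Real.cos ((((2:ℤ)-2:ℤ):ℝ) * ((i:ℝ)*π/(n+1))) = n := by
      norm_num [Nat.card_Icc]
    rw [s1, s2, s0]
    norm_num
    field_simp
    ring
  · -- 3 ≤ k
    have s1 : ∑ i ∈ Finset.Icc 1 n, Real.cos ((k:ℝ) * ((i:ℝ)*π/(n+1)))
        = -(1 + (-1:ℝ)^k)/2 := hS _ (by omega) (by rw [abs_lt]; omega)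
    have s2 : ∑ i ∈ Finset.Icc 1 n, Real.cos (((k+2:ℤ):ℝ) * ((i:ℝ)*π/(n+1)))
        = -(1 + (-1:ℝ)^(k+2))/2 := hS _ (by omega) (by rw [abs_lt]; omega)
    have s3 : ∑ i ∈ Finset.Icc 1 n, Real.cos (((k-2:ℤ):ℝ) * ((i:ℝ)*π/(n+1)))
        = -(1 + (-1:ℝ)^(k-2))/2 := hS _ (by omega) (by rw [abs_lt]; omega)
    rw [s1, s2, s3]
    have hz : (-1:ℝ) ≠ 0 := by norm_num
    have e2 : (-1:ℝ)^(k+2) = (-1:ℝ)^k := by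
      rw [zpow_add₀ hz]; norm_num
    have e3 : (-1:ℝ)^(k-2) = (-1:ℝ)^k := by
      rw [zpow_sub₀ hz]; norm_num
    rw [e2, e3]
    have : (k ≠ 0) ∧ (k+2 ≠ 0) ∧ (k-2 ≠ 0) := by omega
    rw [if_neg this.1, if_neg this.2.1, if_neg this.2.2]
    ring

lemma T_deg : ∀ d : ℕ, (Polynomial.Chebyshev.T ℝ (d:ℤ)).degree = (d:ℕ)
    ∧ 0 < (Polynomial.Chebyshev.T ℝ (d:ℤ)).coeff d := by
  intro d
  induction d using Nat.strong_induction_on with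
  | _ d ih =>
    match d with
    | 0 => simp [Polynomial.Chebyshev.T_zero]
    | 1 =>
      rw [show ((1:ℕ):ℤ) = 1 from rfl, Polynomial.Chebyshev.T_one]
      simp
    | (m+2) =>
      obtain ⟨hd1, hc1⟩ := ih (m+1) (by omega)
      obtain ⟨hd0, hc0⟩ := ih m (by omega)
      have hcast : ((m+2:ℕ):ℤ) = (m:ℤ) + 2 := by push_cast; ring
      have hcast1 : ((m+1:ℕ):ℤ) = (m:ℤ) + 1 := by push_cast; ring
      rw [hcast, Polynomial.Chebyshev.T_add_two]
      rw [hcast1] at hd1 hc1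
      set q1 := Polynomial.Chebyshev.T ℝ ((m:ℤ)+1) with hq1
      set q0 := Polynomial.Chebyshev.T ℝ (m:ℤ) with hq0
      have h2X : (2 * X * q1 : ℝ[X]) = Polynomial.C 2 * X * q1 := by
        rw [map_ofNat]
      have hdeg2X : (2 * X * q1 : ℝ[X]).degree = ((m+2 : ℕ) : WithBot ℕ) := by
        rw [h2X, Polynomial.degree_mul, Polynomial.degree_C_mul_X (by norm_num : (2:ℝ) ≠ 0), hd1]
        push_cast
        ring
      have hlt : q0.degree < (2 * X * q1 : ℝ[X]).degree := by
        rw [hdeg2X, hd0]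
        exact_mod_cast Nat.lt_succ_of_lt (Nat.lt_succ_self m)
      constructor
      · rw [Polynomial.degree_sub_eq_left_of_degree_lt hlt, hdeg2X]
      · rw [Polynomial.coeff_sub]
        have e0 : q0.coeff (m+2) = 0 := by
          apply Polynomial.coeff_eq_zero_of_degree_lt
          rw [hd0]; exact_mod_cast Nat.lt_succ_of_lt (Nat.lt_succ_self m)
        have e1 : (2 * X * q1 : ℝ[X]).coeff (m+2) = 2 * q1.coeff (m+1) := by
          rw [h2X, mul_assoc, Polynomial.coeff_C_mul, Polynomial.coeff_X_mul]
        rw [e0, e1]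
        linarith
lemma cov (p : Polynomial ℝ) :
    ∫ x in (-1:ℝ)..1, p.eval x * Real.sqrt (1 - x^2)
      = ∫ θ in (0:ℝ)..π, p.eval (Real.cos θ) * Real.sin θ^2 := by
  have hg : Continuous fun x : ℝ => p.eval x * Real.sqrt (1 - x^2) :=
    p.continuous.mul (Real.continuous_sqrt.comp (continuous_const.sub (continuous_pow 2)))
  have h := intervalIntegral.integral_comp_smul_deriv
    (f := Real.cos) (f' := fun θ => -Real.sin θ) (a := (0:ℝ)) (b := π)
    (g := fun x => p.eval x * Real.sqrt (1 - x^2))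
    (fun θ _ => Real.hasDerivAt_cos θ) (Real.continuous_sin.neg.continuousOn) hg
  rw [Real.cos_zero, Real.cos_pi, intervalIntegral.integral_symm (-1) 1] at h
  have h2 : ∫ x in (-1:ℝ)..1, p.eval x * Real.sqrt (1 - x^2)
      = ∫ θ in (0:ℝ)..π, Real.sin θ * (p.eval (Real.cos θ) * Real.sqrt (1 - Real.cos θ^2)) := by
    have := congrArg Neg.neg h
    rw [neg_neg] at this
    rw [← this, ← intervalIntegral.integral_neg]
    apply intervalIntegral.integral_congr
    intro θ _
    simp [smul_eq_mul]
  rw [h2]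
  apply intervalIntegral.integral_congr
  intro θ hθ
  beta_reduce
  rw [Set.uIcc_of_le Real.pi_pos.le] at hθ
  have hs : Real.sin θ ≥ 0 := Real.sin_nonneg_of_nonneg_of_le_pi hθ.1 hθ.2
  have : 1 - Real.cos θ^2 = Real.sin θ^2 := by
    have := Real.sin_sq_add_cos_sq θ; linarith
  rw [this, Real.sqrt_sq_eq_abs, _root_.abs_of_nonneg hs]
  ring

lemma quad (n : ℕ) (hn : 1 ≤ n) :
    ∀ m : ℕ, ∀ p : Polynomial ℝ, p.degree < (m:ℕ) → p.degree ≤ ((2*n-1 : ℕ) : WithBot ℕ) →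
    ∫ θ in (0:ℝ)..π, p.eval (Real.cos θ) * Real.sin θ^2
      = (π/(n+1)) * ∑ i ∈ Finset.Icc 1 n,
          Real.sin ((i:ℝ)*π/(n+1))^2 * p.eval (Real.cos ((i:ℝ)*π/(n+1))) := by
  intro m
  induction m with
  | zero =>
    intro p hp _
    have : p = 0 := by
      rw [← Polynomial.degree_eq_bot]
      exact Nat.WithBot.lt_zero_iff.mp (by exact_mod_cast hp)
    simp [this]
  | succ m IH =>
    intro p hp hdeg
    by_cases hp0 : p = 0
    · simp [hp0]
    set d := p.natDegree with hdd
    have hd : p.degree = (d : ℕ) := p.degree_eq_natDegree hp0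
    have hdm : d ≤ m := by
      have : (d : WithBot ℕ) < ((m+1 : ℕ) : WithBot ℕ) := hd ▸ hp
      exact_mod_cast Nat.lt_succ_iff.mp (by exact_mod_cast this)
    have hdD : d ≤ 2*n-1 := by
      have : (d : WithBot ℕ) ≤ ((2*n-1 : ℕ) : WithBot ℕ) := hd ▸ hdeg
      exact_mod_cast this
    obtain ⟨hTd, hTc⟩ := T_deg d
    have hTnd : (Polynomial.Chebyshev.T ℝ (d:ℤ)).natDegree = d :=
      Polynomial.natDegree_eq_of_degree_eq_some hTd
    have hTlc : (Polynomial.Chebyshev.T ℝ (d:ℤ)).leadingCoeff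
        = (Polynomial.Chebyshev.T ℝ (d:ℤ)).coeff d := by
      rw [Polynomial.leadingCoeff, hTnd]
    set c := p.leadingCoeff / (Polynomial.Chebyshev.T ℝ (d:ℤ)).coeff d with hc
    have hc0 : c ≠ 0 := div_ne_zero (Polynomial.leadingCoeff_ne_zero.mpr hp0) (ne_of_gt hTc)
    set q : Polynomial ℝ := Polynomial.C c * Polynomial.Chebyshev.T ℝ (d:ℤ) with hq
    have hdq : q.degree = p.degree := by
      rw [hq, Polynomial.degree_mul, Polynomial.degree_C hc0, hTd, hd, zero_add]
    have hlcq : q.leadingCoeff = p.leadingCoeff := by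
      rw [hq, Polynomial.leadingCoeff_mul, Polynomial.leadingCoeff_C, hTlc, hc]
      field_simp
    have hr : (p - q).degree < p.degree := Polynomial.degree_sub_lt hdq.symm hp0 hlcq.symm
    have hrm : (p - q).degree < (m : ℕ) := by
      refine lt_of_lt_of_le hr ?_
      rw [hd]; exact_mod_cast hdm
    have hrD : (p - q).degree ≤ ((2*n-1 : ℕ) : WithBot ℕ) :=
      le_of_lt (lt_of_lt_of_le hr hdeg)
    have hev : ∀ x : ℝ, p.eval x = (p - q).eval x
        + c * (Polynomial.Chebyshev.T ℝ (d:ℤ)).eval x := by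
      intro x; simp [hq]
    have hcont1 : Continuous fun θ : ℝ => (p - q).eval (Real.cos θ) * Real.sin θ^2 :=
      ((p - q).continuous.comp Real.continuous_cos).mul (Real.continuous_sin.pow 2)
    have hcont2 : Continuous fun θ : ℝ => c * (Real.cos ((d:ℤ)*θ) * Real.sin θ^2) :=
      continuous_const.mul ((Real.continuous_cos.comp (continuous_const.mul continuous_id)).mul
        (Real.continuous_sin.pow 2))
    have hkd : (d:ℤ) ≤ 2*(n:ℤ)-1 := by omega
    calc ∫ θ in (0:ℝ)..π, p.eval (Real.cos θ) * Real.sin θ^2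
        = ∫ θ in (0:ℝ)..π, ((p - q).eval (Real.cos θ) * Real.sin θ^2
            + c * (Real.cos ((d:ℤ)*θ) * Real.sin θ^2)) := by
          apply intervalIntegral.integral_congr
          intro θ _
          beta_reduce
          rw [hev (Real.cos θ), ← Polynomial.Chebyshev.T_real_cos]
          ring
      _ = (∫ θ in (0:ℝ)..π, (p - q).eval (Real.cos θ) * Real.sin θ^2)
            + c * ∫ θ in (0:ℝ)..π, Real.cos ((d:ℤ)*θ) * Real.sin θ^2 := by
          rw [intervalIntegral.integral_add (hcont1.intervalIntegrable _ _)
            (hcont2.intervalIntegrable _ _), intervalIntegral.integral_const_mul]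
      _ = (π/(n+1)) * (∑ i ∈ Finset.Icc 1 n,
              Real.sin ((i:ℝ)*π/(n+1))^2 * (p - q).eval (Real.cos ((i:ℝ)*π/(n+1))))
            + c * ((π/(n+1)) * ∑ i ∈ Finset.Icc 1 n,
              Real.sin ((i:ℝ)*π/(n+1))^2 * Real.cos ((d:ℤ) * ((i:ℝ)*π/(n+1)))) := by
          rw [IH (p - q) hrm hrD, key n hn (d:ℤ) (by positivity) hkd]
      _ = (π/(n+1)) * ∑ i ∈ Finset.Icc 1 n,
            Real.sin ((i:ℝ)*π/(n+1))^2 * p.eval (Real.cos ((i:ℝ)*π/(n+1))) := by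
          rw [show (∑ i ∈ Finset.Icc 1 n,
              Real.sin ((i:ℝ)*π/(n+1))^2 * p.eval (Real.cos ((i:ℝ)*π/(n+1))))
            = ∑ i ∈ Finset.Icc 1 n, (Real.sin ((i:ℝ)*π/(n+1))^2
                * (p - q).eval (Real.cos ((i:ℝ)*π/(n+1)))
              + c * (Real.sin ((i:ℝ)*π/(n+1))^2
                * Real.cos ((d:ℤ) * ((i:ℝ)*π/(n+1))))) from
            Finset.sum_congr rfl fun i _ => by
              rw [hev (Real.cos ((i:ℝ)*π/(n+1))), ← Polynomial.Chebyshev.T_real_cos]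
              ring]
          rw [Finset.sum_add_distrib, ← Finset.mul_sum]
          ring

end GaussChebyshevAux

/-- The `n`-point Gauss–Chebyshev quadrature rule of the second kind, with nodes
`cos (iπ / (n + 1))` and weights `(π / (n + 1)) sin² (iπ / (n + 1))`, is exact on all
real polynomials of degree at most `2n - 1` for the weight `√(1 - x²)` on `[-1, 1]`. -/
theorem gauss_chebyshev_second_kind_exact
    (n : ℕ) (hn : 1 ≤ n) (p : Polynomial ℝ)
    (hdeg : p.degree ≤ (2 * n - 1 : ℕ)) :
    ∫ x in (-1:ℝ)..1, p.eval x * Real.sqrt (1 - x ^ 2)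
      = ∑ i ∈ Finset.Icc 1 n,
          (Real.pi / (n + 1)) * (Real.sin ((i:ℝ) * Real.pi / (n + 1))) ^ 2 *
            p.eval (Real.cos ((i:ℝ) * Real.pi / (n + 1))) := by
  have hlt : p.degree < ((2*n : ℕ) : WithBot ℕ) :=
    lt_of_le_of_lt hdeg (by exact_mod_cast (by omega : 2*n-1 < 2*n))
  rw [GaussChebyshevAux.cov p, GaussChebyshevAux.quad n hn (2*n) p hlt hdeg, Finset.mul_sum]
  exact Finset.sum_congr rfl fun i _ => by ring
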